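/- Let f be a polynomial in n variables over ℂ whose Jacobian algebra Q_f is finite-dimensional, and let p₁, …, p_μ be monomials whose residues form a ℂ-basis of Q_f. Let F = f ⊕ f be the polynomial f(x₁,…,xₙ) + f(y₁,…,yₙ) in 2n variables. Then the residues of the μ² monomials pᵢ(x)·pⱼ(y), 1 ≤ i, j ≤ μ, form a ℂ-basis of the Jacobian algebra Q_F of F. -/

import Mathlib

open MvPolynomial

/-- The Jacobian ideal of a multivariate polynomial: the ideal generated by its
partial derivatives. -/
noncomputable def jacobianIdeal {σ : Type*} (f : MvPolynomial σ ℂ) :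
    Ideal (MvPolynomial σ ℂ) :=
  Ideal.span (Set.range fun i : σ => MvPolynomial.pderiv i f)

/-- `f ⊕ f`: the polynomial `f(x₁,…,xₙ) + f(y₁,…,yₙ)` in `2n` variables. -/
noncomputable def doubling {n : ℕ} (f : MvPolynomial (Fin n) ℂ) :
    MvPolynomial (Fin n ⊕ Fin n) ℂ :=
  rename Sum.inl f + rename Sum.inr f

section Aux

variable {n : ℕ} (f : MvPolynomial (Fin n) ℂ)

lemma pderiv_doubling_inl (i : Fin n) :
    pderiv (Sum.inl i) (doubling f) = rename Sum.inl (pderiv i f) := by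
  unfold doubling
  rw [map_add, pderiv_rename Sum.inl_injective,
    pderiv_eq_zero_of_notMem_vars (f := rename (Sum.inr : Fin n → Fin n ⊕ Fin n) f), add_zero]
  intro h
  obtain ⟨j, -, hj⟩ := mem_vars_rename _ _ h
  exact Sum.inr_ne_inl hj

lemma pderiv_doubling_inr (i : Fin n) :
    pderiv (Sum.inr i) (doubling f) = rename Sum.inr (pderiv i f) := by
  unfold doubling
  rw [map_add, pderiv_rename Sum.inr_injective,
    pderiv_eq_zero_of_notMem_vars (f := rename (Sum.inl : Fin n → Fin n ⊕ Fin n) f), zero_add]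
  intro h
  obtain ⟨j, -, hj⟩ := mem_vars_rename _ _ h
  exact Sum.inl_ne_inr hj

lemma rename_inl_mem (a : MvPolynomial (Fin n) ℂ) (ha : a ∈ jacobianIdeal f) :
    rename (Sum.inl : Fin n → Fin n ⊕ Fin n) a ∈ jacobianIdeal (doubling f) := by
  have h : (jacobianIdeal f).map
      ((rename (Sum.inl : Fin n → Fin n ⊕ Fin n)).toRingHom) ≤ jacobianIdeal (doubling f) := by
    rw [jacobianIdeal, Ideal.map_span, Ideal.span_le]
    rintro _ ⟨_, ⟨i, rfl⟩, rfl⟩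
    exact Ideal.subset_span ⟨Sum.inl i, pderiv_doubling_inl f i⟩
  exact h (Ideal.mem_map_of_mem _ ha)

lemma rename_inr_mem (a : MvPolynomial (Fin n) ℂ) (ha : a ∈ jacobianIdeal f) :
    rename (Sum.inr : Fin n → Fin n ⊕ Fin n) a ∈ jacobianIdeal (doubling f) := by
  have h : (jacobianIdeal f).map
      ((rename (Sum.inr : Fin n → Fin n ⊕ Fin n)).toRingHom) ≤ jacobianIdeal (doubling f) := by
    rw [jacobianIdeal, Ideal.map_span, Ideal.span_le]
    rintro _ ⟨_, ⟨i, rfl⟩, rfl⟩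
    exact Ideal.subset_span ⟨Sum.inr i, pderiv_doubling_inr f i⟩
  exact h (Ideal.mem_map_of_mem _ ha)

abbrev Qf {n : ℕ} (f : MvPolynomial (Fin n) ℂ) := MvPolynomial (Fin n) ℂ ⧸ jacobianIdeal f

/-- The left factor map `Q_f →ₐ Q_{f⊕f}`. -/
noncomputable def leftHom :
    Qf f →ₐ[ℂ] (MvPolynomial (Fin n ⊕ Fin n) ℂ ⧸ jacobianIdeal (doubling f)) :=
  Ideal.Quotient.liftₐ (jacobianIdeal f)
    ((Ideal.Quotient.mkₐ ℂ (jacobianIdeal (doubling f))).comp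
      (rename (Sum.inl : Fin n → Fin n ⊕ Fin n)))
    (fun a ha => by
      show Ideal.Quotient.mk (jacobianIdeal (doubling f)) (rename Sum.inl a) = 0
      exact Ideal.Quotient.eq_zero_iff_mem.2 (rename_inl_mem f a ha))

/-- The right factor map `Q_f →ₐ Q_{f⊕f}`. -/
noncomputable def rightHom :
    Qf f →ₐ[ℂ] (MvPolynomial (Fin n ⊕ Fin n) ℂ ⧸ jacobianIdeal (doubling f)) :=
  Ideal.Quotient.liftₐ (jacobianIdeal f)
    ((Ideal.Quotient.mkₐ ℂ (jacobianIdeal (doubling f))).comp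
      (rename (Sum.inr : Fin n → Fin n ⊕ Fin n)))
    (fun a ha => by
      show Ideal.Quotient.mk (jacobianIdeal (doubling f)) (rename Sum.inr a) = 0
      exact Ideal.Quotient.eq_zero_iff_mem.2 (rename_inr_mem f a ha))

@[simp] lemma leftHom_mk (a : MvPolynomial (Fin n) ℂ) :
    leftHom f (Ideal.Quotient.mk (jacobianIdeal f) a) =
      Ideal.Quotient.mk (jacobianIdeal (doubling f)) (rename Sum.inl a) := rfl

@[simp] lemma rightHom_mk (a : MvPolynomial (Fin n) ℂ) :
    rightHom f (Ideal.Quotient.mk (jacobianIdeal f) a) =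
      Ideal.Quotient.mk (jacobianIdeal (doubling f)) (rename Sum.inr a) := rfl

open TensorProduct in
/-- The forward map `Q_f ⊗ Q_f →ₐ Q_{f⊕f}`. -/
noncomputable def theta :
    (Qf f ⊗[ℂ] Qf f) →ₐ[ℂ]
      (MvPolynomial (Fin n ⊕ Fin n) ℂ ⧸ jacobianIdeal (doubling f)) :=
  Algebra.TensorProduct.lift (leftHom f) (rightHom f) (fun _ _ => Commute.all _ _)

open TensorProduct in
@[simp] lemma theta_tmul (x y : Qf f) :
    theta f (x ⊗ₜ y) = leftHom f x * rightHom f y :=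
  Algebra.TensorProduct.lift_tmul _ _ _ _ _

open TensorProduct in
/-- Evaluation map to the tensor product of Jacobian algebras. -/
noncomputable def chiAux :
    MvPolynomial (Fin n ⊕ Fin n) ℂ →ₐ[ℂ] (Qf f ⊗[ℂ] Qf f) :=
  aeval (Sum.elim
    (fun i => Ideal.Quotient.mk (jacobianIdeal f) (X i) ⊗ₜ[ℂ] (1 : Qf f))
    (fun i => (1 : Qf f) ⊗ₜ[ℂ] Ideal.Quotient.mk (jacobianIdeal f) (X i)))

open TensorProduct in
lemma chiAux_rename_inl (a : MvPolynomial (Fin n) ℂ) :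
    chiAux f (rename Sum.inl a) = Ideal.Quotient.mk (jacobianIdeal f) a ⊗ₜ[ℂ] (1 : Qf f) := by
  have h : (chiAux f).comp (rename (Sum.inl : Fin n → Fin n ⊕ Fin n)) =
      (Algebra.TensorProduct.includeLeft (S := ℂ)).comp
        (Ideal.Quotient.mkₐ ℂ (jacobianIdeal f)) := by
    apply MvPolynomial.algHom_ext
    intro i
    simp [chiAux]
  exact congrArg (fun g => g a) (congrArg DFunLike.coe h)

open TensorProduct in
lemma chiAux_rename_inr (a : MvPolynomial (Fin n) ℂ) :
    chiAux f (rename Sum.inr a) = (1 : Qf f) ⊗ₜ[ℂ] Ideal.Quotient.mk (jacobianIdeal f) a := by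
  have h : (chiAux f).comp (rename (Sum.inr : Fin n → Fin n ⊕ Fin n)) =
      (Algebra.TensorProduct.includeRight (R := ℂ)).comp
        (Ideal.Quotient.mkₐ ℂ (jacobianIdeal f)) := by
    apply MvPolynomial.algHom_ext
    intro i
    simp [chiAux]
  exact congrArg (fun g => g a) (congrArg DFunLike.coe h)

open TensorProduct in
/-- The inverse map `Q_{f⊕f} →ₐ Q_f ⊗ Q_f`. -/
noncomputable def chi :
    (MvPolynomial (Fin n ⊕ Fin n) ℂ ⧸ jacobianIdeal (doubling f)) →ₐ[ℂ] (Qf f ⊗[ℂ] Qf f) :=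
  Ideal.Quotient.liftₐ (jacobianIdeal (doubling f)) (chiAux f) (by
    intro a ha
    have hle : jacobianIdeal (doubling f) ≤ RingHom.ker (chiAux f).toRingHom := by
      rw [jacobianIdeal, Ideal.span_le]
      rintro _ ⟨i, rfl⟩
      rcases i with i | i
      · rw [SetLike.mem_coe, RingHom.mem_ker]
        show chiAux f (pderiv (Sum.inl i) (doubling f)) = 0
        have h0 : Ideal.Quotient.mk (jacobianIdeal f) (pderiv i f) = 0 :=
          Ideal.Quotient.eq_zero_iff_mem.2 (Ideal.subset_span ⟨i, rfl⟩)
        rw [pderiv_doubling_inl, chiAux_rename_inl, h0, zero_tmul]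
      · rw [SetLike.mem_coe, RingHom.mem_ker]
        show chiAux f (pderiv (Sum.inr i) (doubling f)) = 0
        have h0 : Ideal.Quotient.mk (jacobianIdeal f) (pderiv i f) = 0 :=
          Ideal.Quotient.eq_zero_iff_mem.2 (Ideal.subset_span ⟨i, rfl⟩)
        rw [pderiv_doubling_inr, chiAux_rename_inr, h0, tmul_zero]
    exact hle ha)

@[simp] lemma chi_mk (a : MvPolynomial (Fin n ⊕ Fin n) ℂ) :
    chi f (Ideal.Quotient.mk (jacobianIdeal (doubling f)) a) = chiAux f a := rfl

open TensorProduct in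
/-- The algebra isomorphism `Q_f ⊗ Q_f ≃ₐ Q_{f⊕f}`. -/
noncomputable def psi :
    (Qf f ⊗[ℂ] Qf f) ≃ₐ[ℂ]
      (MvPolynomial (Fin n ⊕ Fin n) ℂ ⧸ jacobianIdeal (doubling f)) :=
  AlgEquiv.ofAlgHom (theta f) (chi f)
    (by
      apply Ideal.Quotient.algHom_ext
      apply MvPolynomial.algHom_ext
      have hX1 : ∀ i : Fin n, chiAux f (X (Sum.inl i)) =
          Ideal.Quotient.mk (jacobianIdeal f) (X i) ⊗ₜ[ℂ] (1 : Qf f) := fun i => by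
        simp [chiAux]
      have hX2 : ∀ i : Fin n, chiAux f (X (Sum.inr i)) =
          (1 : Qf f) ⊗ₜ[ℂ] Ideal.Quotient.mk (jacobianIdeal f) (X i) := fun i => by
        simp [chiAux]
      rintro (i | i)
      · simp only [AlgHom.comp_apply, Ideal.Quotient.mkₐ_eq_mk, AlgHom.id_apply, chi_mk,
          hX1, theta_tmul, map_one, mul_one, leftHom_mk, rename_X]
      · simp only [AlgHom.comp_apply, Ideal.Quotient.mkₐ_eq_mk, AlgHom.id_apply, chi_mk,
          hX2, theta_tmul, map_one, one_mul, rightHom_mk, rename_X])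
    (by
      apply Algebra.TensorProduct.ext
      · apply Ideal.Quotient.algHom_ext
        apply MvPolynomial.algHom_ext
        intro i
        simp only [AlgHom.comp_apply, Ideal.Quotient.mkₐ_eq_mk, AlgHom.coe_comp,
          Function.comp_apply, Algebra.TensorProduct.includeLeft_apply, AlgHom.id_comp,
          theta_tmul, map_one, mul_one, leftHom_mk, rename_X, chi_mk]
        simp [chiAux]
      · apply Ideal.Quotient.algHom_ext
        apply MvPolynomial.algHom_ext
        intro i
        simp only [AlgHom.comp_apply, Ideal.Quotient.mkₐ_eq_mk, AlgHom.restrictScalars_apply,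
          AlgHom.coe_comp, Function.comp_apply, Algebra.TensorProduct.includeRight_apply,
          AlgHom.id_comp, theta_tmul, map_one, one_mul, rightHom_mk, rename_X, chi_mk]
        simp [chiAux])

end Aux

open TensorProduct in
/-- If `p₁, …, p_μ` are monomials whose residues form a `ℂ`-basis of the Jacobian
algebra `Q_f`, then the residues of the `μ²` monomials `pᵢ(x)·pⱼ(y)` form a
`ℂ`-basis of the Jacobian algebra of `f ⊕ f`. -/
theorem monomial_basis_of_doubling {n μ : ℕ} (f : MvPolynomial (Fin n) ℂ)
    (hfd : FiniteDimensional ℂ (MvPolynomial (Fin n) ℂ ⧸ jacobianIdeal f))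
    (p : Fin μ → MvPolynomial (Fin n) ℂ)
    (hmon : ∀ i, ∃ d : Fin n →₀ ℕ, p i = monomial d 1)
    (b : Module.Basis (Fin μ) ℂ (MvPolynomial (Fin n) ℂ ⧸ jacobianIdeal f))
    (hb : ∀ i, b i = Ideal.Quotient.mk (jacobianIdeal f) (p i)) :
    ∃ B : Module.Basis (Fin μ × Fin μ) ℂ
        (MvPolynomial (Fin n ⊕ Fin n) ℂ ⧸ jacobianIdeal (doubling f)),
      ∀ ij : Fin μ × Fin μ,
        B ij = Ideal.Quotient.mk (jacobianIdeal (doubling f))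
          (rename (Sum.inl : Fin n → Fin n ⊕ Fin n) (p ij.1) *
            rename (Sum.inr : Fin n → Fin n ⊕ Fin n) (p ij.2)) := by
  refine ⟨(Module.Basis.tensorProduct b b).map (psi f).toLinearEquiv, ?_⟩
  rintro ⟨i, j⟩
  rw [Module.Basis.map_apply, Module.Basis.tensorProduct_apply, hb, hb]
  show theta f _ = _
  rw [theta_tmul, leftHom_mk, rightHom_mk, map_mul]
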